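/- Let G be a digraph whose underlying undirected graph is connected, let r be a vertex of G, and let L_0, L_1, …, L_t be the level decomposition of G from r (which partitions the vertex set). Then there exists a spanning tree T of the underlying undirected graph of G, rooted at r, with the following property: for every vertex x, the restriction of the (undirected) path in T from r to x to any single level L_i is traversed consecutively and forms a single directed path of G. Consequently, for each 1 ≤ i ≤ t, the restriction of any root-to-vertex path of T to G_i = L_{i−1} ∪ L_i is a concatenation of at most two directed paths of G. -/

import Mathlib

/-- Auxiliary definition for the level decomposition: `(levelsPair E r i).1` is the level
`L_i` and `(levelsPair E r i).2` is the union `L_0 ∪ ⋯ ∪ L_i`.  Level `L_0` consists of all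
vertices reachable from `r`; for `i ≥ 1`, an even level `L_i` consists of the new vertices
reachable from the previous levels, and an odd level `L_i` consists of the new vertices from
which some vertex of the previous levels is reachable. -/
def levelsPair {V : Type*} (E : V → V → Prop) (r : V) : ℕ → Set V × Set V
  | 0 => ({v | Relation.ReflTransGen E r v}, {v | Relation.ReflTransGen E r v})
  | i + 1 =>
      let U := (levelsPair E r i).2
      let L : Set V := {v | v ∉ U ∧ ∃ u ∈ U,
        if (i + 1) % 2 = 0 then Relation.ReflTransGen E u v else Relation.ReflTransGen E v u}
      (L, U ∪ L)

/-- The level decomposition `L_0, L_1, L_2, …` of the digraph `E` from the vertex `r`. -/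
def levels {V : Type*} (E : V → V → Prop) (r : V) (i : ℕ) : Set V := (levelsPair E r i).1

namespace Stmt9Aux

open Relation List
open scoped Classical

variable {V : Type} (E : V → V → Prop) (r : V)

/-- The union of levels up to `i`. -/
abbrev Un (i : ℕ) : Set V := (levelsPair E r i).2

variable {E r}

lemma mem_levels_zero {v : V} : v ∈ levels E r 0 ↔ ReflTransGen E r v := Iff.rfl

lemma mem_Un_zero {v : V} : v ∈ Un E r 0 ↔ ReflTransGen E r v := Iff.rfl

lemma Un_succ (i : ℕ) : Un E r (i+1) = Un E r i ∪ levels E r (i+1) := rfl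

lemma mem_levels_succ {v : V} {i : ℕ} : v ∈ levels E r (i+1) ↔
    v ∉ Un E r i ∧ ∃ u ∈ Un E r i,
      if (i + 1) % 2 = 0 then ReflTransGen E u v else ReflTransGen E v u := Iff.rfl

lemma levels_subset_Un (i : ℕ) : levels E r i ⊆ Un E r i := by
  cases i with
  | zero => exact fun v hv => hv
  | succ i => rw [Un_succ]; exact Set.subset_union_right

lemma Un_mono {i j : ℕ} (h : i ≤ j) : Un E r i ⊆ Un E r j := by
  induction j with
  | zero => simpa [Nat.le_zero.mp h] using subset_rfl
  | succ j ih =>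
    rcases Nat.lt_or_ge i (j+1) with h' | h'
    · exact (ih (Nat.lt_succ_iff.mp h')).trans (by rw [Un_succ]; exact Set.subset_union_left)
    · have : i = j + 1 := le_antisymm h h'
      subst this; exact subset_rfl

lemma mem_Un_iff {v : V} {i : ℕ} : v ∈ Un E r i ↔ ∃ j ≤ i, v ∈ levels E r j := by
  induction i with
  | zero => exact ⟨fun h => ⟨0, le_rfl, h⟩, fun ⟨j, hj, h⟩ => by rw [Nat.le_zero.mp hj] at h; exact h⟩
  | succ i ih =>
    rw [Un_succ]
    constructor
    · rintro (h | h)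
      · obtain ⟨j, hj, h⟩ := ih.mp h; exact ⟨j, hj.trans (Nat.le_succ i), h⟩
      · exact ⟨i+1, le_rfl, h⟩
    · rintro ⟨j, hj, h⟩
      rcases Nat.lt_or_ge j (i+1) with h' | h'
      · exact Or.inl (ih.mpr ⟨j, Nat.lt_succ_iff.mp h', h⟩)
      · have : j = i + 1 := le_antisymm hj h'
        subst this; exact Or.inr h

lemma not_mem_levels_of_lt {v : V} {i j : ℕ} (hij : i < j) (hv : v ∈ levels E r j) :
    v ∉ levels E r i := by
  intro hvi
  obtain ⟨j', rfl⟩ : ∃ j', j = j' + 1 := ⟨j - 1, by omega⟩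
  exact (mem_levels_succ.mp hv).1 (Un_mono (by omega) (levels_subset_Un i hvi))

lemma absorb_even {i : ℕ} {u v : V} (hu : u ∈ Un E r i) (h : ReflTransGen E u v)
    (hp : (i + 1) % 2 = 0) : v ∈ Un E r (i+1) := by
  rw [Un_succ]
  by_cases hv : v ∈ Un E r i
  · exact Or.inl hv
  · exact Or.inr (mem_levels_succ.mpr ⟨hv, u, hu, by rw [if_pos hp]; exact h⟩)

lemma absorb_odd {i : ℕ} {u v : V} (hu : u ∈ Un E r i) (h : ReflTransGen E v u)
    (hp : (i + 1) % 2 = 1) : v ∈ Un E r (i+1) := by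
  rw [Un_succ]
  by_cases hv : v ∈ Un E r i
  · exact Or.inl hv
  · exact Or.inr (mem_levels_succ.mpr ⟨hv, u, hu, by rw [if_neg (by omega)]; exact h⟩)

lemma step_mem {u v : V} {i : ℕ} (hu : u ∈ Un E r i) (h : E u v ∨ E v u) :
    ∃ j, v ∈ Un E r j := by
  rcases h with h | h
  · set k := if i % 2 = 1 then i else i + 1 with hk
    have hki : i ≤ k := by rw [hk]; split <;> omega
    have hkp : (k + 1) % 2 = 0 := by rw [hk]; split <;> omega
    exact ⟨k + 1, absorb_even (Un_mono hki hu) (ReflTransGen.single h) hkp⟩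
  · set k := if i % 2 = 0 then i else i + 1 with hk
    have hki : i ≤ k := by rw [hk]; split <;> omega
    have hkp : (k + 1) % 2 = 1 := by rw [hk]; split <;> omega
    exact ⟨k + 1, absorb_odd (Un_mono hki hu) (ReflTransGen.single h) hkp⟩

lemma covered {UG : SimpleGraph V} (hUG : ∀ a b : V, UG.Adj a b ↔ a ≠ b ∧ (E a b ∨ E b a))
    (hconn : UG.Connected) (v : V) : ∃ i, v ∈ levels E r i := by
  suffices h : ∃ i, v ∈ Un E r i by
    obtain ⟨i, hi⟩ := h
    obtain ⟨j, _, hj⟩ := mem_Un_iff.mp hi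
    exact ⟨j, hj⟩
  by_contra hv
  obtain ⟨w⟩ := hconn r v
  obtain ⟨d, _, hd1, hd2⟩ := w.exists_boundary_dart {x | ∃ i, x ∈ Un E r i}
    ⟨0, mem_Un_zero.mpr ReflTransGen.refl⟩ hv
  obtain ⟨i, hi⟩ := hd1
  exact hd2 (step_mem hi ((hUG d.fst d.snd).mp d.adj).2)


section ChainHelpers

variable {R : V → V → Prop}

lemma getLastD_of_ne_nil {l : List V} (h : l ≠ []) (a : V) : l.getLastD a = l.getLast h := by
  simp [List.getLastD_eq_getLast?, List.getLast?_eq_getLast h]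

lemma chain_rtg : ∀ (l : List V) (u : V), List.Chain R u l → ReflTransGen R u (l.getLastD u)
  | [], u, _ => ReflTransGen.refl
  | a :: l, u, h => by
    rw [List.Chain, List.chain_cons] at h
    rw [List.getLastD_cons]
    exact ReflTransGen.head h.1 (chain_rtg l a h.2)

lemma chain_last_edge : ∀ (l : List V) (u w : V), List.Chain R u (l ++ [w]) →
    R (l.getLastD u) w
  | [], u, w, h => by rw [List.nil_append, List.Chain, List.chain_cons] at h; exact h.1
  | a :: l, u, w, h => by
    rw [List.cons_append, List.Chain, List.chain_cons] at h
    rw [List.getLastD_cons]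
    exact chain_last_edge l a w h.2

lemma chain_init : ∀ (l : List V) (u w : V), List.Chain R u (l ++ [w]) → List.Chain R u l
  | [], u, w, _ => List.Chain.nil
  | a :: l, u, w, h => by
    rw [List.cons_append, List.Chain, List.chain_cons] at h
    exact List.Chain.cons h.1 (chain_init l a w h.2)

lemma chain'_imp_mem {S : V → V → Prop} :
    ∀ {l : List V}, l.Chain' R → (∀ a ∈ l, ∀ b ∈ l, R a b → S a b) → l.Chain' S
  | [], _, _ => List.isChain_nil
  | [_], _, _ => List.isChain_singleton _
  | a :: b :: l, h, hm => by
    rw [List.Chain', List.isChain_cons_cons] at h ⊢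
    refine ⟨hm a (by simp) b (by simp) h.1, chain'_imp_mem h.2 ?_⟩
    intro x hx y hy hxy
    exact hm x (by simp [hx]) y (by simp [hy]) hxy

lemma split_mono (f : V → ℕ) (i : ℕ) :
    ∀ l : List V, l.Pairwise (fun a b => f a ≤ f b) →
      ∃ l₁ l₂ l₃ : List V, l = l₁ ++ l₂ ++ l₃ ∧ (∀ a ∈ l₁, f a < i) ∧
        (∀ a ∈ l₂, f a = i) ∧ (∀ a ∈ l₃, i < f a)
  | [], _ => ⟨[], [], [], by simp, by simp, by simp, by simp⟩
  | a :: l, hp => by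
    rw [List.pairwise_cons] at hp
    obtain ⟨l₁, l₂, l₃, hl, h1, h2, h3⟩ := split_mono f i l hp.2
    rcases lt_trichotomy (f a) i with h | h | h
    · exact ⟨a :: l₁, l₂, l₃, by simp [hl], by
        intro b hb; rcases List.mem_cons.mp hb with rfl | hb; exact h; exact h1 b hb, h2, h3⟩
    · have hl₁ : l₁ = [] := by
        rw [List.eq_nil_iff_forall_not_mem]
        intro b hb
        have hbl : b ∈ l := by rw [hl]; simp [hb]
        have := hp.1 b hbl
        have := h1 b hb
        omega
      refine ⟨[], a :: l₂, l₃, by simp [hl, hl₁], by simp, ?_, h3⟩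
      intro b hb; rcases List.mem_cons.mp hb with rfl | hb; exact h; exact h2 b hb
    · refine ⟨[], [], a :: l, by simp, by simp, by simp, ?_⟩
      intro b hb
      rcases List.mem_cons.mp hb with rfl | hb
      · exact h
      · exact lt_of_lt_of_le h (hp.1 b hb)

end ChainHelpers

section Levels

variable (hcov : ∀ v : V, ∃ i, v ∈ levels E r i)

/-- The index of the level containing `v`. -/
noncomputable def lvl (v : V) : ℕ := Nat.find (hcov v)

lemma mem_levels_lvl (v : V) : v ∈ levels E r (lvl hcov v) := Nat.find_spec (hcov v)

lemma lvl_eq_of_mem {v : V} {i : ℕ} (h : v ∈ levels E r i) : lvl hcov v = i := by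
  have h1 : lvl hcov v ≤ i := Nat.find_le h
  rcases lt_or_eq_of_le h1 with h2 | h2
  · exact absurd (mem_levels_lvl hcov v) (not_mem_levels_of_lt h2 h)
  · exact h2

lemma lvl_r : lvl hcov r = 0 := lvl_eq_of_mem hcov (mem_levels_zero.mpr ReflTransGen.refl)

lemma lvl_le_of_mem_Un {v : V} {i : ℕ} (h : v ∈ Un E r i) : lvl hcov v ≤ i := by
  obtain ⟨j, hj, h⟩ := mem_Un_iff.mp h
  exact (lvl_eq_of_mem hcov h) ▸ hj

lemma mem_Un_lvl (v : V) : v ∈ Un E r (lvl hcov v) :=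
  levels_subset_Un _ (mem_levels_lvl hcov v)

/-- Witness predicate: `v` can be reached by a directed chain of length `n` from/to
a vertex of the previous union of levels (or from `r` if `lvl v = 0`). -/
def Wit (v : V) (n : ℕ) : Prop :=
  ∃ (u : V) (l : List V), n = l.length + 1 ∧
    (lvl hcov v = 0 → u = r) ∧
    (lvl hcov v ≠ 0 → u ∈ Un E r (lvl hcov v - 1)) ∧
    (if lvl hcov v % 2 = 0 then List.Chain E u (l ++ [v]) else List.Chain E v (l ++ [u]))

lemma wit_exists {v : V} (hv : v ≠ r) : ∃ n, Wit hcov v n := by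
  rcases Nat.eq_zero_or_pos (lvl hcov v) with h0 | hpos
  · -- level 0
    have hm : ReflTransGen E r v := mem_levels_zero.mp (h0 ▸ mem_levels_lvl hcov v)
    obtain ⟨l, hl, hlast⟩ := List.exists_isChain_cons_of_relationReflTransGen hm
    have hne : l ≠ [] := by
      rintro rfl; exact hv (by simpa using hlast.symm)
    have hlast2 : l.getLast hne = v := by
      rw [← hlast]; exact (List.getLast_cons hne).symm
    refine ⟨l.length, r, l.dropLast, by
      simp [List.length_dropLast, Nat.sub_add_cancel (List.length_pos_iff.mpr hne)],
      fun _ => rfl, fun h => absurd h0 h, ?_⟩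
    rw [if_pos (by omega)]
    rw [← hlast2, List.dropLast_append_getLast hne]
    exact hl
  · obtain ⟨i, hi⟩ : ∃ i, lvl hcov v = i + 1 := ⟨lvl hcov v - 1, by omega⟩
    have hmem := mem_levels_lvl hcov v
    rw [hi] at hmem
    obtain ⟨hnot, u, hu, hreach⟩ := mem_levels_succ.mp hmem
    by_cases hpar : (i + 1) % 2 = 0
    · rw [if_pos hpar] at hreach
      obtain ⟨l, hl, hlast⟩ := List.exists_isChain_cons_of_relationReflTransGen hreach
      have hne : l ≠ [] := by
        rintro rfl
        exact hnot (by simpa using hlast ▸ hu)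
      have hlast2 : l.getLast hne = v := by
        rw [← hlast]; exact (List.getLast_cons hne).symm
      refine ⟨l.length, u, l.dropLast, by
        simp [List.length_dropLast, Nat.sub_add_cancel (List.length_pos_iff.mpr hne)],
        fun h => absurd h (by omega), fun _ => by rw [hi]; simpa using hu, ?_⟩
      rw [if_pos (by rw [hi]; exact hpar)]
      rw [← hlast2, List.dropLast_append_getLast hne]
      exact hl
    · rw [if_neg hpar] at hreach
      obtain ⟨l, hl, hlast⟩ := List.exists_isChain_cons_of_relationReflTransGen hreach
      have hne : l ≠ [] := by
        rintro rfl
        have : v = u := by simpa using hlast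
        exact hnot (this ▸ hu)
      have hlast2 : l.getLast hne = u := by
        rw [← hlast]; exact (List.getLast_cons hne).symm
      refine ⟨l.length, u, l.dropLast, by
        simp [List.length_dropLast, Nat.sub_add_cancel (List.length_pos_iff.mpr hne)],
        fun h => absurd h (by omega), fun _ => by rw [hi]; simpa using hu, ?_⟩
      rw [if_neg (by rw [hi]; exact hpar)]
      rw [← hlast2, List.dropLast_append_getLast hne]
      exact hl


noncomputable def dd (v : V) : ℕ := if h : v ≠ r then Nat.find (wit_exists hcov h) else 0

noncomputable def NN (v : V) : ℕ ×ₗ (ℕ ×ₗ ℕ) :=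
  toLex (if v = r then 0 else 1, toLex (lvl hcov v, dd hcov v))

noncomputable def par (v : V) : V :=
  if h : v ≠ r then
    let spec := Nat.find_spec (wit_exists hcov h)
    if lvl hcov v % 2 = 0 then spec.choose_spec.choose.getLastD spec.choose
    else spec.choose_spec.choose.headD spec.choose
  else r

lemma NN_lt_of (v w : V) (hw : w ≠ r)
    (h : v = r ∨ lvl hcov v < lvl hcov w ∨ (lvl hcov v = lvl hcov w ∧ dd hcov v < dd hcov w)) :
    NN hcov v < NN hcov w := by
  rcases h with h | h | h
  · subst h
    rw [NN, NN, if_pos rfl, if_neg hw]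
    exact Prod.Lex.lt_iff |>.mpr (Or.inl (by norm_num))
  · by_cases hv : v = r
    · rw [NN, NN, if_pos hv, if_neg hw]
      exact Prod.Lex.lt_iff |>.mpr (Or.inl (by norm_num))
    · rw [NN, NN, if_neg hv, if_neg hw]
      exact Prod.Lex.lt_iff |>.mpr (Or.inr ⟨rfl, (Prod.Lex.lt_iff).mpr (Or.inl h)⟩)
  · by_cases hv : v = r
    · rw [NN, NN, if_pos hv, if_neg hw]
      exact Prod.Lex.lt_iff |>.mpr (Or.inl (by norm_num))
    · rw [NN, NN, if_neg hv, if_neg hw]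
      exact Prod.Lex.lt_iff |>.mpr (Or.inr ⟨rfl,
        (Prod.Lex.lt_iff).mpr (Or.inr ⟨h.1, h.2⟩)⟩)

lemma par_spec {v : V} (h : v ≠ r) :
    (lvl hcov v % 2 = 0 → E (par hcov v) v) ∧ (lvl hcov v % 2 = 1 → E v (par hcov v)) ∧
    lvl hcov (par hcov v) ≤ lvl hcov v ∧ NN hcov (par hcov v) < NN hcov v := by
  have hdd : dd hcov v = Nat.find (wit_exists hcov h) := by rw [dd, dif_pos h]
  have hspec : Wit hcov v (Nat.find (wit_exists hcov h)) := Nat.find_spec (wit_exists hcov h)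
  obtain ⟨u, l, hul, hn, hu0, hupos, hchain⟩ :
      ∃ (u : V) (l : List V),
        (par hcov v = if lvl hcov v % 2 = 0 then l.getLastD u else l.headD u) ∧
        Nat.find (wit_exists hcov h) = l.length + 1 ∧
        (lvl hcov v = 0 → u = r) ∧
        (lvl hcov v ≠ 0 → u ∈ Un E r (lvl hcov v - 1)) ∧
        (if lvl hcov v % 2 = 0 then List.Chain E u (l ++ [v])
          else List.Chain E v (l ++ [u])) := by
    refine ⟨hspec.choose, hspec.choose_spec.choose, ?_, hspec.choose_spec.choose_spec⟩
    rw [par, dif_pos h]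
  by_cases hp : lvl hcov v % 2 = 0
  · -- even case
    rw [if_pos hp] at hchain hul
    have hedge : E (par hcov v) v := hul ▸ chain_last_edge l u v hchain
    have hrtg : ReflTransGen E u (par hcov v) := hul ▸ chain_rtg l u (chain_init l u v hchain)
    have hpUn : par hcov v ∈ Un E r (lvl hcov v) := by
      rcases Nat.eq_zero_or_pos (lvl hcov v) with h0 | hposl
      · rw [h0]
        rw [hu0 h0] at hrtg
        exact mem_Un_zero.mpr hrtg
      · obtain ⟨i, hi⟩ : ∃ i, lvl hcov v = i + 1 := ⟨lvl hcov v - 1, by omega⟩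
        have hu' : u ∈ Un E r i := by
          have h2 := hupos (by omega)
          rwa [hi, Nat.add_sub_cancel] at h2
        rw [hi]
        rw [hi] at hp
        exact absorb_even hu' hrtg hp
    have hlvlle : lvl hcov (par hcov v) ≤ lvl hcov v := lvl_le_of_mem_Un hcov hpUn
    refine ⟨fun _ => hedge, fun h1 => by omega, hlvlle, ?_⟩
    by_cases hpr : par hcov v = r
    · exact NN_lt_of hcov _ v h (Or.inl hpr)
    rcases lt_or_eq_of_le hlvlle with hlt | heq
    · exact NN_lt_of hcov _ v h (Or.inr (Or.inl hlt))
    · -- same level: distance decreases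
      have hlne : l ≠ [] := by
        rintro rfl
        simp only [List.getLastD_nil] at hul
        rcases Nat.eq_zero_or_pos (lvl hcov v) with h0 | hposl
        · exact hpr (hul.trans (hu0 h0))
        · have h2 := hupos (by omega)
          rw [← hul] at h2
          have := lvl_le_of_mem_Un hcov h2
          omega
      have hwit : Wit hcov (par hcov v) l.length := by
        refine ⟨u, l.dropLast, by
          simp [List.length_dropLast, Nat.sub_add_cancel (List.length_pos_iff.mpr hlne)],
          fun h2 => hu0 (by omega), fun h2 => by
            rw [heq]; exact hupos (by omega), ?_⟩
        rw [if_pos (by rw [heq]; exact hp)]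
        rw [hul, getLastD_of_ne_nil hlne, List.dropLast_append_getLast hlne]
        exact chain_init l u v hchain
      have hddp : dd hcov (par hcov v) ≤ l.length := by
        rw [dd, dif_pos hpr]
        exact Nat.find_le hwit
      refine NN_lt_of hcov _ v h (Or.inr (Or.inr ⟨heq, by omega⟩))
  · -- odd case
    rw [if_neg hp] at hchain hul
    have hp1 : lvl hcov v % 2 = 1 := by omega
    have hlvlpos : lvl hcov v ≠ 0 := by
      intro h0
      have := mem_levels_lvl hcov v
      rw [h0] at this
      have : lvl hcov v = 0 := lvl_eq_of_mem hcov this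
      omega
    obtain ⟨i, hi⟩ : ∃ i, lvl hcov v = i + 1 := ⟨lvl hcov v - 1, by omega⟩
    have hu' : u ∈ Un E r i := by
      have h2 := hupos hlvlpos
      rwa [hi, Nat.add_sub_cancel] at h2
    have hedge : E v (par hcov v) := by
      rw [hul]
      cases l with
      | nil => rw [List.nil_append, List.Chain, List.chain_cons] at hchain; exact hchain.1
      | cons a l' => rw [List.cons_append, List.Chain, List.chain_cons] at hchain; exact hchain.1
    have hrtg : ReflTransGen E (par hcov v) u := by
      rw [hul]
      cases l with
      | nil => exact ReflTransGen.refl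
      | cons a l' =>
        rw [List.cons_append, List.Chain, List.chain_cons] at hchain
        have := chain_rtg _ a hchain.2
        rwa [show (l' ++ [u]).getLastD a = u by simp] at this
    have hpUn : par hcov v ∈ Un E r (lvl hcov v) := by
      rw [hi]
      rw [hi] at hp1
      exact absorb_odd hu' hrtg hp1
    have hlvlle : lvl hcov (par hcov v) ≤ lvl hcov v := lvl_le_of_mem_Un hcov hpUn
    refine ⟨fun h0 => by omega, fun _ => hedge, hlvlle, ?_⟩
    by_cases hpr : par hcov v = r
    · exact NN_lt_of hcov _ v h (Or.inl hpr)
    rcases lt_or_eq_of_le hlvlle with hlt | heq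
    · exact NN_lt_of hcov _ v h (Or.inr (Or.inl hlt))
    · -- same level: distance decreases
      have hlne : l ≠ [] := by
        rintro rfl
        simp only [List.headD_nil] at hul
        rw [← hul] at hu'
        have := lvl_le_of_mem_Un hcov hu'
        omega
      obtain ⟨a, l', rfl⟩ : ∃ a l', l = a :: l' := by
        cases l with
        | nil => exact absurd rfl hlne
        | cons a l' => exact ⟨a, l', rfl⟩
      rw [List.headD_cons] at hul
      rw [List.cons_append, List.Chain, List.chain_cons] at hchain
      have hwit : Wit hcov (par hcov v) (a :: l').length := by
        refine ⟨u, l', by simp, fun h2 => by rw [heq] at h2; exact absurd h2 hlvlpos,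
          fun h2 => by rw [heq]; exact hupos hlvlpos, ?_⟩
        rw [if_neg (by rw [heq]; exact hp)]
        rw [hul]
        exact hchain.2
      have hddp : dd hcov (par hcov v) ≤ (a :: l').length := by
        rw [dd, dif_pos hpr]
        exact Nat.find_le hwit
      refine NN_lt_of hcov _ v h (Or.inr (Or.inr ⟨heq, by
        simp only [List.length_cons] at hddp hn ⊢
        omega⟩))

/-- The spanning tree: each non-root vertex is joined to its parent. -/
noncomputable def Tr : SimpleGraph V :=
  SimpleGraph.fromRel (fun a b => a ≠ r ∧ par hcov a = b)

lemma tr_adj {a b : V} : (Tr hcov).Adj a b ↔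
    a ≠ b ∧ ((a ≠ r ∧ par hcov a = b) ∨ (b ≠ r ∧ par hcov b = a)) :=
  SimpleGraph.fromRel_adj _ a b

lemma tr_reach (v : V) : (Tr hcov).Reachable v r := by
  have wf : WellFounded (fun a b : V => NN hcov a < NN hcov b) :=
    InvImage.wf (NN hcov) (wellFounded_lt)
  refine wf.induction (C := fun v => (Tr hcov).Reachable v r) v ?_
  intro x ih
  by_cases hx : x = r
  · subst hx; rfl
  · have hlt := (par_spec hcov hx).2.2.2
    have hadj : (Tr hcov).Adj x (par hcov x) := by
      rw [tr_adj]
      exact ⟨fun he => absurd hlt (by rw [← he]; exact lt_irrefl _), Or.inl ⟨hx, rfl⟩⟩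
    exact hadj.reachable.trans (ih _ hlt)

lemma tr_conn : (Tr hcov).Connected := by
  haveI : Nonempty V := ⟨r⟩
  exact SimpleGraph.Connected.mk (fun a b => (tr_reach hcov a).trans (tr_reach hcov b).symm)

lemma firstDart_mem_darts {G : SimpleGraph V} {u w : V} (p : G.Walk u w) (hp : ¬p.Nil) :
    p.firstDart hp ∈ p.darts := by
  cases p with
  | nil => exact absurd SimpleGraph.Walk.Nil.nil hp
  | cons h q =>
    rw [SimpleGraph.Walk.darts_cons]
    have he : (SimpleGraph.Walk.cons h q).firstDart hp = ⟨(_, _), h⟩ := by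
      ext <;> simp [SimpleGraph.Walk.firstDart]
    rw [he]
    exact List.mem_cons_self

lemma tr_acyclic : (Tr hcov).IsAcyclic := by
  intro w c hc
  obtain ⟨x, hx, hmax⟩ : ∃ x ∈ c.support, ∀ b ∈ c.support, NN hcov b ≤ NN hcov x := by
    obtain ⟨x, hx, hmax⟩ := Finset.exists_max_image c.support.toFinset (NN hcov)
      ⟨w, List.mem_toFinset.mpr c.start_mem_support⟩
    exact ⟨x, List.mem_toFinset.mp hx, fun b hb => hmax b (List.mem_toFinset.mpr hb)⟩
  have hc' : (c.rotate x hx).IsCycle := hc.rotate hx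
  have hmemdarts : ∀ d ∈ (c.rotate x hx).darts, d ∈ c.darts :=
    fun d hd => ((c.rotate_darts x hx).perm.mem_iff).mp hd
  have hnil : ¬(c.rotate x hx).Nil := hc'.not_nil
  have hnil' : ¬(c.rotate x hx).reverse.Nil := by
    rw [SimpleGraph.Walk.nil_iff_length_eq] at hnil ⊢
    rwa [SimpleGraph.Walk.length_reverse]
  set d₁ := (c.rotate x hx).firstDart hnil with hd₁
  have hd₁mem : d₁ ∈ (c.rotate x hx).darts := firstDart_mem_darts _ hnil
  set d' := (c.rotate x hx).reverse.firstDart hnil' with hd'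
  have hd'mem : d' ∈ (c.rotate x hx).reverse.darts := firstDart_mem_darts _ hnil'
  have hd₂mem : d'.symm ∈ (c.rotate x hx).darts := by
    rw [SimpleGraph.Walk.darts_reverse, List.mem_reverse, List.mem_map] at hd'mem
    obtain ⟨d₂, hd₂, hd₂e⟩ := hd'mem
    rwa [← hd₂e, SimpleGraph.Dart.symm_symm]
  -- the two neighbours of x on the cycle
  have hy : (Tr hcov).Adj x d₁.snd := d₁.adj
  have hz : (Tr hcov).Adj d'.snd x := d'.symm.adj
  have hysup : d₁.snd ∈ c.support :=
    c.dart_snd_mem_support_of_mem_darts (hmemdarts _ hd₁mem)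
  have hzsup : d'.snd ∈ c.support := by
    have := c.dart_fst_mem_support_of_mem_darts (hmemdarts _ hd₂mem)
    simpa using this
  have hpary : x ≠ r ∧ par hcov x = d₁.snd := by
    rcases (tr_adj hcov).mp hy with ⟨hne, h1 | h2⟩
    · exact h1
    · exfalso
      have hlt := (par_spec hcov h2.1).2.2.2
      rw [h2.2] at hlt
      exact absurd (hmax _ hysup) (not_le.mpr hlt)
  have hparz : x ≠ r ∧ par hcov x = d'.snd := by
    rcases (tr_adj hcov).mp hz with ⟨hne, h1 | h2⟩
    · exfalso
      have hlt := (par_spec hcov h1.1).2.2.2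
      rw [h1.2] at hlt
      exact absurd (hmax _ hzsup) (not_le.mpr hlt)
    · exact h2
  have hyz : d₁.snd = d'.snd := hpary.2 ▸ hparz.2 ▸ rfl
  -- two darts with the same edge
  have hnodup : ((c.rotate x hx).darts.map SimpleGraph.Dart.edge).Nodup := hc'.edges_nodup
  have heq : d₁ = d'.symm := by
    refine List.inj_on_of_nodup_map hnodup hd₁mem hd₂mem ?_
    rw [SimpleGraph.Dart.edge_symm]
    show s(d₁.fst, d₁.snd) = s(d'.fst, d'.snd)
    rw [← hyz]
    have h1 : d₁.fst = x := rfl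
    have h2 : d'.fst = x := rfl
    rw [h1, h2]
  have : d₁.snd = x := by rw [heq]; rfl
  exact hy.ne' (by rw [← this])

lemma walk_chain {v x : V} (w : (Tr hcov).Walk v x) (hw : w.IsPath)
    (hv : v = r ∨ par hcov v ∉ w.support) :
    w.support.Chain' (fun a b => a = par hcov b ∧ b ≠ r) := by
  induction w with
  | nil => exact List.isChain_singleton _
  | @cons u y z hadj q ih =>
    obtain ⟨hqp, hus⟩ := (SimpleGraph.Walk.cons_isPath_iff hadj q).mp hw
    have hD : u = par hcov y ∧ y ≠ r := by
      rcases (tr_adj hcov).mp hadj with ⟨hne, h1 | h2⟩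
      · exfalso
        rcases hv with hv | hv
        · exact h1.1 hv
        · exact hv (by
            rw [h1.2, SimpleGraph.Walk.support_cons]
            exact List.mem_cons_of_mem _ q.start_mem_support)
      · exact ⟨h2.2.symm, h2.1⟩
    have hchainq := ih hqp (Or.inr (by rw [← hD.1]; exact hus))
    rw [SimpleGraph.Walk.support_cons]
    rw [q.support_eq_cons] at hchainq ⊢
    exact List.isChain_cons_cons.mpr ⟨hD, hchainq⟩

lemma mem_levels_iff_lvl {a : V} {i : ℕ} : a ∈ levels E r i ↔ lvl hcov a = i :=
  ⟨lvl_eq_of_mem hcov, fun h => h ▸ mem_levels_lvl hcov a⟩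

lemma support_chains {x : V} (w : (Tr hcov).Walk r x) (hw : w.IsPath) :
    w.support.Pairwise (fun a b => lvl hcov a ≤ lvl hcov b) ∧
    w.support.Chain' (fun a b =>
      (lvl hcov b % 2 = 0 → E a b) ∧ (lvl hcov b % 2 = 1 → E b a)) := by
  have hchain := walk_chain hcov w hw (Or.inl rfl)
  constructor
  · haveI : IsTrans V (fun a b => lvl hcov a ≤ lvl hcov b) := ⟨fun _ _ _ => le_trans⟩
    rw [← List.isChain_iff_pairwise]
    exact List.IsChain.imp (fun a b (hab : a = par hcov b ∧ b ≠ r) => hab.1 ▸ (par_spec hcov hab.2).2.2.1) hchain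
  · refine List.IsChain.imp (fun a b hab => ?_) hchain
    obtain ⟨h1, h2⟩ := hab
    exact ⟨fun h0 => h1 ▸ (par_spec hcov h2).1 h0, fun h0 => h1 ▸ (par_spec hcov h2).2.1 h0⟩

lemma level_chain {l : List V} (i : ℕ)
    (hR : l.Chain' (fun a b => (lvl hcov b % 2 = 0 → E a b) ∧ (lvl hcov b % 2 = 1 → E b a)))
    (hconst : ∀ a ∈ l, lvl hcov a = i) : l.Chain' E ∨ l.Chain' (flip E) := by
  by_cases hi : i % 2 = 0
  · exact Or.inl (chain'_imp_mem hR (fun a _ b hb hab => hab.1 (by rw [hconst b hb]; exact hi)))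
  · exact Or.inr (chain'_imp_mem hR (fun a _ b hb hab => hab.2 (by rw [hconst b hb]; omega)))

end Levels

end Stmt9Aux


/-- For a digraph `E` with connected underlying undirected graph `UG` and any vertex `r`,
there is a spanning tree `T` of `UG` (rooted at `r`) such that along each root-to-vertex
path of `T`, the vertices belonging to any single level `L_i` of the level decomposition
from `r` appear consecutively and form a single directed path of `E` (traversed in one of
the two directions); consequently the restriction of a root path to `G_i = L_{i-1} ∪ L_i`
is a concatenation of at most two directed paths of `E`. -/
theorem stmt9 {V : Type} [Fintype V] (E : V → V → Prop) (r : V)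
    (UG : SimpleGraph V) (hUG : ∀ a b : V, UG.Adj a b ↔ a ≠ b ∧ (E a b ∨ E b a))
    (hconn : UG.Connected) :
    ∃ T : SimpleGraph V, T.IsTree ∧ T ≤ UG ∧
      (∀ (x : V) (w : T.Walk r x), w.IsPath → ∀ i : ℕ,
        ∃ l₁ l₂ l₃ : List V, w.support = l₁ ++ l₂ ++ l₃ ∧
          (∀ a ∈ l₂, a ∈ levels E r i) ∧
          (∀ a ∈ l₁, a ∉ levels E r i) ∧ (∀ a ∈ l₃, a ∉ levels E r i) ∧
          (l₂.Chain' E ∨ l₂.Chain' (flip E))) ∧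
      (∀ (x : V) (w : T.Walk r x), w.IsPath → ∀ i : ℕ, 1 ≤ i →
        ∃ l₁ l₂ l₃ l₄ : List V, w.support = l₁ ++ l₂ ++ l₃ ++ l₄ ∧
          (∀ a ∈ l₂ ++ l₃, a ∈ levels E r (i - 1) ∪ levels E r i) ∧
          (∀ a ∈ l₁, a ∉ levels E r (i - 1) ∪ levels E r i) ∧
          (∀ a ∈ l₄, a ∉ levels E r (i - 1) ∪ levels E r i) ∧
          (l₂.Chain' E ∨ l₂.Chain' (flip E)) ∧ (l₃.Chain' E ∨ l₃.Chain' (flip E))) := by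
  classical
  open Stmt9Aux in
  have hcov : ∀ v : V, ∃ i, v ∈ levels E r i := fun v => Stmt9Aux.covered hUG hconn v
  refine ⟨Stmt9Aux.Tr hcov, ⟨Stmt9Aux.tr_conn hcov, Stmt9Aux.tr_acyclic hcov⟩, ?_, ?_, ?_⟩
  · -- Tr ≤ UG
    intro a b hab
    rcases (Stmt9Aux.tr_adj hcov).mp hab with ⟨hne, h1 | h2⟩
    · rw [hUG]
      refine ⟨hne, ?_⟩
      have hs := Stmt9Aux.par_spec hcov h1.1
      rcases Nat.mod_two_eq_zero_or_one (Stmt9Aux.lvl hcov a) with hp | hp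
      · exact Or.inr (h1.2 ▸ hs.1 hp)
      · exact Or.inl (h1.2 ▸ hs.2.1 hp)
    · rw [hUG]
      refine ⟨hne, ?_⟩
      have hs := Stmt9Aux.par_spec hcov h2.1
      rcases Nat.mod_two_eq_zero_or_one (Stmt9Aux.lvl hcov b) with hp | hp
      · exact Or.inl (h2.2 ▸ hs.1 hp)
      · exact Or.inr (h2.2 ▸ hs.2.1 hp)
  · -- single level
    intro x w hw i
    obtain ⟨hpw, hR⟩ := Stmt9Aux.support_chains hcov w hw
    obtain ⟨l₁, l₂, l₃, heq, h1, h2, h3⟩ := Stmt9Aux.split_mono (Stmt9Aux.lvl hcov) i _ hpw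
    refine ⟨l₁, l₂, l₃, heq, ?_, ?_, ?_, ?_⟩
    · exact fun a ha => (Stmt9Aux.mem_levels_iff_lvl hcov).mpr (h2 a ha)
    · intro a ha hmem
      have := (Stmt9Aux.mem_levels_iff_lvl hcov).mp hmem
      have := h1 a ha
      omega
    · intro a ha hmem
      have := (Stmt9Aux.mem_levels_iff_lvl hcov).mp hmem
      have := h3 a ha
      omega
    · rw [heq] at hR
      exact Stmt9Aux.level_chain hcov i (List.IsChain.left_of_append hR).right_of_append h2
  · -- two consecutive levels
    intro x w hw i hi
    obtain ⟨hpw, hR⟩ := Stmt9Aux.support_chains hcov w hw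
    obtain ⟨l₁, l₂, l₃', heq, h1, h2, h3⟩ := Stmt9Aux.split_mono (Stmt9Aux.lvl hcov) (i-1) _ hpw
    have hpw3 : l₃'.Pairwise (fun a b => Stmt9Aux.lvl hcov a ≤ Stmt9Aux.lvl hcov b) := by
      refine List.Pairwise.sublist ?_ hpw
      rw [heq]
      exact (List.sublist_append_right (l₁ ++ l₂) l₃')
    obtain ⟨m₁, m₂, m₃, heq2, g1, g2, g3⟩ := Stmt9Aux.split_mono (Stmt9Aux.lvl hcov) i _ hpw3
    have hm₁ : m₁ = [] := by
      rw [List.eq_nil_iff_forall_not_mem]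
      intro a ha
      have := g1 a ha
      have := h3 a (by rw [heq2]; simp [ha])
      omega
    subst hm₁
    rw [List.nil_append] at heq2
    subst heq2
    refine ⟨l₁, l₂, m₂, m₃, by rw [heq, List.append_assoc, List.append_assoc,
      List.append_assoc], ?_, ?_, ?_, ?_, ?_⟩
    · intro a ha
      rcases List.mem_append.mp ha with ha | ha
      · exact Or.inl ((Stmt9Aux.mem_levels_iff_lvl hcov).mpr (h2 a ha))
      · exact Or.inr ((Stmt9Aux.mem_levels_iff_lvl hcov).mpr (g2 a ha))
    · intro a ha hmem
      have h4 := h1 a ha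
      rcases hmem with hmem | hmem <;>
        · have := (Stmt9Aux.mem_levels_iff_lvl hcov).mp hmem; omega
    · intro a ha hmem
      have h4 := g3 a ha
      have h5 := h3 a (by simp [ha])
      rcases hmem with hmem | hmem <;>
        · have := (Stmt9Aux.mem_levels_iff_lvl hcov).mp hmem; omega
    · rw [heq] at hR
      exact Stmt9Aux.level_chain hcov (i-1) (List.IsChain.left_of_append hR).right_of_append h2
    · rw [heq] at hR
      exact Stmt9Aux.level_chain hcov i
        (List.IsChain.right_of_append hR).left_of_append g2
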